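/- Let α, β ≥ 1 and let A be any 2×2 matrix with strictly positive entries and R(A) = α. Then there exists a 2×2 matrix B with strictly positive entries, R(B) = β, and R(AB) = Φ(α,β). -/

import Mathlib

theorem key_lemma8 (a b c d sa sb : ℝ) (ha : 0<a) (hb : 0<b) (hc : 0<c) (hd : 0<d)
    (hsa : 1 ≤ sa) (hsb : 1 ≤ sb) (h : a*d = sa^2*(b*c)) :
    (a*(d*sb/(c*sa))+b)*(c+d*(sa*sb*c/d)) / ((a+b*(sa*sb*c/d))*(c*(d*sb/(c*sa))+d))
      = ((1+sa*sb)/(sa+sb))^2 := by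
  have hsa0 : (0:ℝ) < sa := by linarith
  have hsb0 : (0:ℝ) < sb := by linarith
  have hsum : (0:ℝ) < sa + sb := by linarith
  have hd2 : d = sa^2*b*c/a := by field_simp; linarith [h]
  subst hd2
  rw [div_pow, div_eq_div_iff (by positivity) (by positivity)]
  field_simp
  ring

theorem stmt8 (R : Matrix (Fin 2) (Fin 2) ℝ → ℝ)
    (hR : ∀ M, R M = max (M 0 0 * M 1 1 / (M 0 1 * M 1 0))
                        (M 0 1 * M 1 0 / (M 0 0 * M 1 1)))
    (α β : ℝ) (hα : 1 ≤ α) (hβ : 1 ≤ β)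
    (A : Matrix (Fin 2) (Fin 2) ℝ) (hA : ∀ i j, 0 < A i j) (hRA : R A = α) :
    ∃ B : Matrix (Fin 2) (Fin 2) ℝ, (∀ i j, 0 < B i j) ∧ R B = β ∧
      R (A * B) = ((1 + Real.sqrt (α * β)) / (Real.sqrt α + Real.sqrt β)) ^ 2 := by
  have ha := hA 0 0
  have hb := hA 0 1
  have hc := hA 1 0
  have hd := hA 1 1
  set a := A 0 0
  set b := A 0 1
  set c := A 1 0
  set d := A 1 1
  set sa := Real.sqrt α with hsadef
  set sb := Real.sqrt β with hsbdef
  have hsa1 : 1 ≤ sa := by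
    rw [hsadef, show (1:ℝ) = Real.sqrt 1 by simp]
    exact Real.sqrt_le_sqrt hα
  have hsb1 : 1 ≤ sb := by
    rw [hsbdef, show (1:ℝ) = Real.sqrt 1 by simp]
    exact Real.sqrt_le_sqrt hβ
  have hsa0 : (0:ℝ) < sa := by linarith
  have hsb0 : (0:ℝ) < sb := by linarith
  have hsa2 : sa^2 = α := Real.sq_sqrt (by linarith)
  have hsb2 : sb^2 = β := Real.sq_sqrt (by linarith)
  have hsum : (0:ℝ) < sa + sb := by linarith
  have hRHS : ((1 + Real.sqrt (α * β)) / (Real.sqrt α + Real.sqrt β)) ^ 2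
      = ((1 + sa*sb)/(sa+sb))^2 := by
    rw [Real.sqrt_mul (by linarith : (0:ℝ) ≤ α)]
  set Φ := ((1 + sa*sb)/(sa+sb))^2 with hΦdef
  have hΦ1 : 1 ≤ Φ := by
    have h1 : sa + sb ≤ 1 + sa*sb := by nlinarith
    have h2 : 1 ≤ (1+sa*sb)/(sa+sb) := (le_div_iff₀ hsum).mpr (by linarith)
    nlinarith
  have hΦ0 : 0 < Φ := by positivity
  have hmaxΦ : max Φ Φ⁻¹ = Φ := by
    refine max_eq_left ?_
    exact le_trans (inv_le_one_of_one_le₀ hΦ1) hΦ1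
  rw [hR] at hRA
  rw [hRHS]
  rcases max_choice (a * d / (b * c)) (b * c / (a * d)) with hm | hm <;> rw [hm] at hRA
  · -- a*d/(b*c) = α
    have h : a*d = sa^2*(b*c) := by
      rw [hsa2]
      field_simp at hRA
      linarith
    refine ⟨!![d*sb/(c*sa), 1; 1, sa*sb*c/d], ?_, ?_, ?_⟩
    · intro i j
      fin_cases i <;> fin_cases j <;> simp <;> positivity
    · rw [hR]
      have e : (!![d*sb/(c*sa), 1; 1, sa*sb*c/d] : Matrix (Fin 2) (Fin 2) ℝ) 0 0 *
          (!![d*sb/(c*sa), 1; 1, sa*sb*c/d] : Matrix (Fin 2) (Fin 2) ℝ) 1 1 = β := by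
        simp
        field_simp
        linear_combination hsb2
      simp only [e]
      norm_num
      exact le_trans (inv_le_one_of_one_le₀ hβ) hβ
    · rw [hR]
      have e00 : (A * !![d*sb/(c*sa), 1; 1, sa*sb*c/d]) 0 0 = a*(d*sb/(c*sa))+b := by
        simp [Matrix.mul_apply, Fin.sum_univ_two]; rfl
      have e01 : (A * !![d*sb/(c*sa), 1; 1, sa*sb*c/d]) 0 1 = a+b*(sa*sb*c/d) := by
        simp [Matrix.mul_apply, Fin.sum_univ_two]; rfl
      have e10 : (A * !![d*sb/(c*sa), 1; 1, sa*sb*c/d]) 1 0 = c*(d*sb/(c*sa))+d := by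
        simp [Matrix.mul_apply, Fin.sum_univ_two]; rfl
      have e11 : (A * !![d*sb/(c*sa), 1; 1, sa*sb*c/d]) 1 1 = c+d*(sa*sb*c/d) := by
        simp [Matrix.mul_apply, Fin.sum_univ_two]; rfl
      rw [e00, e01, e10, e11]
      have hX : (a*(d*sb/(c*sa))+b)*(c+d*(sa*sb*c/d)) /
          ((a+b*(sa*sb*c/d))*(c*(d*sb/(c*sa))+d)) = Φ :=
        key_lemma8 a b c d sa sb ha hb hc hd hsa1 hsb1 h
      have hY : (a+b*(sa*sb*c/d))*(c*(d*sb/(c*sa))+d) /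
          ((a*(d*sb/(c*sa))+b)*(c+d*(sa*sb*c/d))) = Φ⁻¹ := by
        rw [← hX, inv_div]
      rw [hX, hY, hmaxΦ]
  · -- b*c/(a*d) = α
    have h : b*c = sa^2*(a*d) := by
      rw [hsa2]
      field_simp at hRA
      linarith
    refine ⟨!![1, sa*sb*d/c; c*sb/(d*sa), 1], ?_, ?_, ?_⟩
    · intro i j
      fin_cases i <;> fin_cases j <;> simp <;> positivity
    · rw [hR]
      have e : (!![1, sa*sb*d/c; c*sb/(d*sa), 1] : Matrix (Fin 2) (Fin 2) ℝ) 0 1 *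
          (!![1, sa*sb*d/c; c*sb/(d*sa), 1] : Matrix (Fin 2) (Fin 2) ℝ) 1 0 = β := by
        simp
        field_simp
        linear_combination hsb2
      simp only [e]
      norm_num
      exact le_trans (inv_le_one_of_one_le₀ hβ) hβ
    · rw [hR]
      have e00 : (A * !![1, sa*sb*d/c; c*sb/(d*sa), 1]) 0 0 = b*(c*sb/(d*sa))+a := by
        simp [Matrix.mul_apply, Fin.sum_univ_two]; ring
      have e01 : (A * !![1, sa*sb*d/c; c*sb/(d*sa), 1]) 0 1 = b+a*(sa*sb*d/c) := by
        simp [Matrix.mul_apply, Fin.sum_univ_two]; ring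
      have e10 : (A * !![1, sa*sb*d/c; c*sb/(d*sa), 1]) 1 0 = d*(c*sb/(d*sa))+c := by
        simp [Matrix.mul_apply, Fin.sum_univ_two]; ring
      have e11 : (A * !![1, sa*sb*d/c; c*sb/(d*sa), 1]) 1 1 = d+c*(sa*sb*d/c) := by
        simp [Matrix.mul_apply, Fin.sum_univ_two]; ring
      rw [e00, e01, e10, e11]
      have hX : (b*(c*sb/(d*sa))+a)*(d+c*(sa*sb*d/c)) /
          ((b+a*(sa*sb*d/c))*(d*(c*sb/(d*sa))+c)) = Φ :=
        key_lemma8 b a d c sa sb hb ha hd hc hsa1 hsb1 h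
      have hY : (b+a*(sa*sb*d/c))*(d*(c*sb/(d*sa))+c) /
          ((b*(c*sb/(d*sa))+a)*(d+c*(sa*sb*d/c))) = Φ⁻¹ := by
        rw [← hX, inv_div]
      rw [hX, hY, hmaxΦ]
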